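/- arXiv:1604.03306 — 2 statements merged into one kernel-verified Lean document; each statement's English description precedes it below -/
import Mathlib

section
/- Let K, N ≥ 1 be integers and let A be an m×n real matrix satisfying the restricted isometry property of order NK+1 with constant δ < 1/√(K/N + 1). Let x ∈ ℝⁿ be a vector whose support T satisfies |T| ≤ K. Then for every index set Λ ⊆ {1,…,n} (possibly empty) with T \ Λ ≠ ∅ and |T ∪ Λ| + N ≤ NK + 1, and every set W ⊆ {1,…,n} with |W| = N and W ∩ (T ∪ Λ) = ∅, the residual r = Ax − P_Λ(Ax) satisfies max_{i∈T\Λ} |⟨Aeᵢ, r⟩| > min_{i∈W} |⟨Aeᵢ, r⟩|. (This is the per-iteration guarantee, valid at every iteration including the first, implying that the generalized orthogonal matching pursuit algorithm exactly recovers every K-sparse signal x from y = Ax.) -/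
set_option maxHeartbeats 1000000


open scoped InnerProductSpace BigOperators

/-- Regard a plain vector in `Fin m → ℝ` as an element of Euclidean space
(so that `‖·‖` is the Euclidean norm and `⟪·,·⟫_ℝ` the Euclidean inner product). -/
noncomputable def toE {m : ℕ} (v : Fin m → ℝ) : EuclideanSpace ℝ (Fin m) := WithLp.toLp 2 v

/-- The `j`-th column of the matrix `A`, viewed as a vector in Euclidean space. -/
noncomputable def col {m n : ℕ} (A : Matrix (Fin m) (Fin n) ℝ) (j : Fin n) :
    EuclideanSpace ℝ (Fin m) := WithLp.toLp 2 (fun i => A i j)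

/-- The number of nonzero entries of a vector. -/
noncomputable def sparsity {n : ℕ} (z : Fin n → ℝ) : ℕ :=
  (Finset.univ.filter (fun i => z i ≠ 0)).card

/-- `A` satisfies the restricted isometry property of order `s` with constant `δ`:
`(1−δ)‖z‖₂² ≤ ‖Az‖₂² ≤ (1+δ)‖z‖₂²` for every vector `z` with at most `s` nonzero entries. -/
def RIP {m n : ℕ} (A : Matrix (Fin m) (Fin n) ℝ) (s : ℕ) (δ : ℝ) : Prop :=
  ∀ z : Fin n → ℝ, sparsity z ≤ s →
    (1 - δ) * ‖toE z‖ ^ 2 ≤ ‖toE (A.mulVec z)‖ ^ 2 ∧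
    ‖toE (A.mulVec z)‖ ^ 2 ≤ (1 + δ) * ‖toE z‖ ^ 2

/-- Orthogonal projection of `ℝᵐ` onto the span of the columns of `A` indexed by `Λ`. -/
noncomputable def projSpan {m n : ℕ} (A : Matrix (Fin m) (Fin n) ℝ) (Λ : Finset (Fin n))
    (v : EuclideanSpace ℝ (Fin m)) : EuclideanSpace ℝ (Fin m) :=
  Submodule.orthogonalProjectionOnto (Submodule.span ℝ ((fun j => col A j) '' (Λ : Set (Fin n)))) v

lemma normsq {m : ℕ} (z : Fin m → ℝ) : ‖toE z‖ ^ 2 = ∑ i, z i ^ 2 := by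
  rw [EuclideanSpace.norm_eq, Real.sq_sqrt (by positivity)]
  congr 1; ext i; rw [Real.norm_eq_abs, sq_abs]; rfl

lemma inner_toE {m : ℕ} (a b : Fin m → ℝ) : ⟪toE a, toE b⟫_ℝ = ∑ i, a i * b i := by
  simp [toE, PiLp.inner_apply, RCLike.inner_apply]
  exact Finset.sum_congr rfl (fun i _ => mul_comm _ _)

lemma mulVec_inner {m n : ℕ} (A : Matrix (Fin m) (Fin n) ℝ) (u : Fin n → ℝ)
    (r : EuclideanSpace ℝ (Fin m)) :
    ⟪r, toE (A.mulVec u)⟫_ℝ = ∑ j, u j * ⟪col A j, r⟫_ℝ := by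
  have h1 : ⟪r, toE (A.mulVec u)⟫_ℝ = ∑ i, r i * ∑ j, A i j * u j := by
    simpa [toE, Matrix.mulVec, dotProduct] using inner_toE (fun i => r i) (A.mulVec u)
  have h2 : ∀ j, ⟪col A j, r⟫_ℝ = ∑ i, A i j * r i := by
    intro j; simpa [toE, col] using inner_toE (fun i => A i j) (fun i => r i)
  rw [h1]
  simp only [h2, Finset.mul_sum]
  rw [Finset.sum_comm]
  congr 1; ext i; congr 1; ext j; ring

lemma exists_rep {m n : ℕ} (A : Matrix (Fin m) (Fin n) ℝ) (Λ : Finset (Fin n))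
    (p : EuclideanSpace ℝ (Fin m))
    (hp : p ∈ Submodule.span ℝ ((fun j => col A j) '' (Λ : Set (Fin n)))) :
    ∃ v : Fin n → ℝ, (∀ j, v j ≠ 0 → j ∈ Λ) ∧ toE (A.mulVec v) = p := by
  induction hp using Submodule.span_induction with
  | mem w hw =>
    obtain ⟨j, hj, rfl⟩ := hw
    refine ⟨Pi.single j 1, ?_, ?_⟩
    · intro k hk
      by_contra hkΛ
      exact hk (Pi.single_eq_of_ne (by rintro rfl; exact hkΛ hj) 1)
    · ext i
      simp [toE, col, Matrix.mulVec_single]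
  | zero => exact ⟨0, by simp, by ext i; simp [toE, Matrix.mulVec_zero]⟩
  | add a b _ _ ha hb =>
    obtain ⟨v1, h1, h1'⟩ := ha
    obtain ⟨v2, h2, h2'⟩ := hb
    refine ⟨v1 + v2, ?_, ?_⟩
    · intro j hj
      by_contra hjΛ
      have e1 : v1 j = 0 := by by_contra h; exact hjΛ (h1 j h)
      have e2 : v2 j = 0 := by by_contra h; exact hjΛ (h2 j h)
      exact hj (by simp [e1, e2])
    · rw [Matrix.mulVec_add, ← h1', ← h2']; rfl
  | smul c a _ ha =>
    obtain ⟨v1, h1, h1'⟩ := ha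
    refine ⟨c • v1, ?_, ?_⟩
    · intro j hj
      apply h1 j
      intro h; exact hj (by simp [h])
    · rw [Matrix.mulVec_smul, ← h1']; rfl

/-- Theorem 3 of Chen–Ge (per-iteration guarantee for gOMP, valid at every iteration
including the first, where `Λ` may be empty): if `A` satisfies the RIP
of order `NK+1` with constant `δ < 1/√(K/N + 1)`, `x` has support `T` with `|T| ≤ K`,
`T \ Λ ≠ ∅`, `|T ∪ Λ| + N ≤ NK + 1`, and `W` has size `N` and is disjoint from `T ∪ Λ`,
then for the residual `r = Ax − P_Λ(Ax)`,
`max_{i∈T\Λ} |⟨Aeᵢ, r⟩| > min_{i∈W} |⟨Aeᵢ, r⟩|`. -/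
theorem stmt7 {m n : ℕ} (K N : ℕ) (hK : 1 ≤ K) (hN : 1 ≤ N)
    (A : Matrix (Fin m) (Fin n) ℝ) (δ : ℝ)
    (hδ : δ < 1 / Real.sqrt ((K : ℝ) / N + 1))
    (hRIP : RIP A (N * K + 1) δ)
    (x : Fin n → ℝ) (T : Finset (Fin n)) (hT : ∀ i, i ∈ T ↔ x i ≠ 0) (hTK : T.card ≤ K)
    (Λ : Finset (Fin n)) (hTΛ : (T \ Λ).Nonempty)
    (hcard : (T ∪ Λ).card + N ≤ N * K + 1)
    (W : Finset (Fin n)) (hWcard : W.card = N) (hWne : W.Nonempty)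
    (hWdis : Disjoint W (T ∪ Λ)) :
    W.inf' hWne (fun i =>
        |⟪col A i, toE (A.mulVec x) - projSpan A Λ (toE (A.mulVec x))⟫_ℝ|)
      < (T \ Λ).sup' hTΛ (fun i =>
        |⟪col A i, toE (A.mulVec x) - projSpan A Λ (toE (A.mulVec x))⟫_ℝ|) := by
  by_contra hcon
  push_neg at hcon
  -- basic numeric setup
  have hN0 : (0:ℝ) < N := by exact_mod_cast hN
  have hK0 : (0:ℝ) < K := by exact_mod_cast hK
  set c : ℝ := Real.sqrt ((K : ℝ) / N + 1) with hc_def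
  have hc1 : 1 < c := by
    have h1 : (1:ℝ) < (K:ℝ)/N + 1 := by
      have : 0 < (K:ℝ)/N := div_pos hK0 hN0
      linarith
    calc (1:ℝ) = Real.sqrt 1 := Real.sqrt_one.symm
      _ < c := Real.sqrt_lt_sqrt (by norm_num) h1
  have hc0 : 0 < c := by linarith
  have hc2 : c ^ 2 = (K : ℝ) / N + 1 := Real.sq_sqrt (by positivity)
  set δ' : ℝ := max δ 0 with hδ'_def
  have hδ'0 : 0 ≤ δ' := le_max_right _ _
  have hδ'lt : δ' < 1 / c := by
    rcases max_cases δ 0 with ⟨h1, _⟩ | ⟨h1, _⟩ <;> rw [hδ'_def, h1]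
    · exact hδ
    · positivity
  have hRIP' : RIP A (N * K + 1) δ' := by
    intro z hz
    obtain ⟨hl, hr⟩ := hRIP z hz
    constructor
    · calc (1 - δ') * ‖toE z‖ ^ 2 ≤ (1 - δ) * ‖toE z‖ ^ 2 := by
            apply mul_le_mul_of_nonneg_right _ (by positivity)
            have := le_max_left δ 0; linarith
        _ ≤ _ := hl
    · calc ‖toE (A.mulVec z)‖ ^ 2 ≤ (1 + δ) * ‖toE z‖ ^ 2 := hr
        _ ≤ (1 + δ') * ‖toE z‖ ^ 2 := by
            apply mul_le_mul_of_nonneg_right _ (by positivity)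
            have := le_max_left δ 0; linarith
  -- the residual
  set y : EuclideanSpace ℝ (Fin m) := toE (A.mulVec x) with hy_def
  set r : EuclideanSpace ℝ (Fin m) := y - projSpan A Λ y with hr_def
  set g : Fin n → ℝ := fun i => ⟪col A i, r⟫_ℝ with hg_def
  set α : ℝ := (T \ Λ).sup' hTΛ (fun i => |g i|) with hα_def
  set β : ℝ := W.inf' hWne (fun i => |g i|) with hβ_def
  have hαβ : α ≤ β := hcon
  have hα0 : 0 ≤ α := by
    obtain ⟨i₀, hi₀⟩ := hTΛ
    exact le_trans (abs_nonneg (g i₀)) (Finset.le_sup' (fun i => |g i|) hi₀)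
  -- orthogonality of the residual to the Λ-columns
  have horth : ∀ i ∈ Λ, g i = 0 := by
    intro i hi
    have hmem : col A i ∈ Submodule.span ℝ ((fun j => col A j) '' (Λ : Set (Fin n))) :=
      Submodule.subset_span ⟨i, hi, rfl⟩
    have hperp := Submodule.sub_starProjection_mem_orthogonal (K := Submodule.span ℝ
      ((fun j => col A j) '' (Λ : Set (Fin n)))) y
    exact hperp (col A i) hmem
  -- representation of the residual as A u with u supported in T ∪ Λ
  obtain ⟨v, hvsupp, hvA⟩ := exists_rep A Λ (projSpan A Λ y)
    (SetLike.coe_mem (Submodule.orthogonalProjectionOnto _ y))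
  set u : Fin n → ℝ := x - v with hu_def
  have hu : toE (A.mulVec u) = r := by
    rw [hu_def, Matrix.mulVec_sub, hr_def, hy_def]
    rw [show toE (A.mulVec x - A.mulVec v) = toE (A.mulVec x) - toE (A.mulVec v) from rfl, hvA]
  have husupp : ∀ j, u j ≠ 0 → j ∈ T ∪ Λ := by
    intro j hj
    rw [hu_def] at hj
    by_contra hjTL
    rw [Finset.mem_union] at hjTL
    push_neg at hjTL
    have hx0 : x j = 0 := by
      by_contra h; exact hjTL.1 ((hT j).2 h)
    have hv0 : v j = 0 := by
      by_contra h; exact hjTL.2 (hvsupp j h)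
    exact hj (by simp [hx0, hv0])
  have huS : ∀ j ∈ T \ Λ, u j = x j := by
    intro j hj
    rw [Finset.mem_sdiff] at hj
    have hv0 : v j = 0 := by
      by_contra h; exact hj.2 (hvsupp j h)
    simp [hu_def, hv0]
  -- key quantities
  set L : ℝ := ∑ i ∈ T \ Λ, |x i| with hL_def
  set U : ℝ := ‖toE u‖ ^ 2 with hU_def
  set P : ℝ := ‖r‖ ^ 2 with hP_def
  set q : ℝ := ∑ i ∈ W, |g i| with hq_def
  -- P = ∑_{T\Λ} x_j g_j
  have hPsum : P = ∑ j ∈ T \ Λ, x j * g j := by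
    have h1 : P = ⟪r, toE (A.mulVec u)⟫_ℝ := by
      rw [hu, hP_def, real_inner_self_eq_norm_sq]
    rw [h1, mulVec_inner]
    rw [← Finset.sum_subset (Finset.subset_univ (T ∪ Λ))
      (by intro j _ hj; have : u j = 0 := by by_contra h; exact hj (husupp j h)
          simp [this])]
    rw [← Finset.sdiff_union_self_eq_union, Finset.sum_union (Finset.sdiff_disjoint)]
    have h2 : ∑ j ∈ Λ, u j * g j = 0 := by
      apply Finset.sum_eq_zero; intro j hj; simp [horth j hj]
    rw [h2, add_zero]
    apply Finset.sum_congr rfl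
    intro j hj; rw [huS j hj]
  have hPle : P ≤ L * α := by
    rw [hPsum, hL_def, Finset.sum_mul]
    apply Finset.sum_le_sum
    intro j hj
    calc x j * g j ≤ |x j * g j| := le_abs_self _
      _ = |x j| * |g j| := abs_mul _ _
      _ ≤ |x j| * α := by
          apply mul_le_mul_of_nonneg_left (Finset.le_sup' _ hj) (abs_nonneg _)
  have hP0 : 0 ≤ P := by rw [hP_def]; positivity
  have hq_ge : (N : ℝ) * α ≤ q := by
    have h1 : (W.card : ℝ) * β ≤ q := by
      rw [hq_def]
      have := Finset.card_nsmul_le_sum W (fun i => |g i|) β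
        (fun i hi => Finset.inf'_le _ hi)
      simpa [nsmul_eq_mul] using this
    rw [hWcard] at h1
    calc (N:ℝ) * α ≤ (N:ℝ) * β := by
          apply mul_le_mul_of_nonneg_left hαβ (by positivity)
      _ ≤ q := h1
  -- the sign vector w on W
  set w : Fin n → ℝ := fun i => if i ∈ W then (if 0 ≤ g i then 1 else -1) else 0 with hw_def
  have hw_normsq : ‖toE w‖ ^ 2 = (N : ℝ) := by
    rw [normsq]
    rw [← Finset.sum_subset (Finset.subset_univ W)
      (by intro j _ hj; simp [hw_def, hj])]
    rw [show ∑ i ∈ W, w i ^ 2 = ∑ i ∈ W, 1 by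
      apply Finset.sum_congr rfl; intro i hi
      rw [hw_def]; simp only [if_pos hi]
      split <;> norm_num]
    simp [hWcard]
  have hwq : ⟪r, toE (A.mulVec w)⟫_ℝ = q := by
    rw [mulVec_inner, hq_def]
    rw [← Finset.sum_subset (Finset.subset_univ W)
      (by intro j _ hj; simp [hw_def, hj])]
    apply Finset.sum_congr rfl
    intro i hi
    rw [hw_def]; simp only [if_pos hi]
    rcases le_or_gt 0 (g i) with h | h
    · rw [if_pos h, one_mul, abs_of_nonneg h]
    · rw [if_neg (not_le.2 h), abs_of_neg h]; ring
  -- inner product of u and w vanishes (disjoint supports)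
  have huw : ⟪toE u, toE w⟫_ℝ = 0 := by
    rw [inner_toE]
    apply Finset.sum_eq_zero
    intro i _
    by_cases hiW : i ∈ W
    · have : u i = 0 := by
        by_contra h
        exact (Finset.disjoint_left.1 hWdis hiW) (husupp i h)
      simp [this]
    · simp [hw_def, hiW]
  -- sparsity bound for u + t • w
  have hsparse : ∀ t : ℝ, sparsity (u + t • w) ≤ N * K + 1 := by
    intro t
    refine le_trans ?_ hcard
    rw [← hWcard]
    calc sparsity (u + t • w)
        ≤ ((T ∪ Λ) ∪ W).card := by
          apply Finset.card_le_card
          intro i hi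
          rw [Finset.mem_filter] at hi
          rw [Finset.mem_union]
          by_contra hcc
          push_neg at hcc
          have h1 : u i = 0 := by
            by_contra h; exact hcc.1 (husupp i h)
          have h2 : w i = 0 := by
            rw [hw_def]; simp [hcc.2]
          exact hi.2 (by simp [Pi.add_apply, h1, h2])
      _ ≤ (T ∪ Λ).card + W.card := Finset.card_union_le _ _
  -- norm expansions
  set R : ℝ := ‖toE (A.mulVec w)‖ ^ 2 with hR_def
  have hnorm1 : ∀ t : ℝ, ‖toE (u + t • w)‖ ^ 2 = U + t ^ 2 * N := by
    intro t
    have he : toE (u + t • w) = toE u + t • toE w := rfl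
    rw [he, norm_add_sq_real, real_inner_smul_right, huw, norm_smul, mul_pow,
      Real.norm_eq_abs, sq_abs, hw_normsq, hU_def]
    ring
  have hnorm2 : ∀ t : ℝ, ‖toE (A.mulVec (u + t • w))‖ ^ 2 = P + 2 * t * q + t ^ 2 * R := by
    intro t
    have he : toE (A.mulVec (u + t • w)) = r + t • toE (A.mulVec w) := by
      rw [Matrix.mulVec_add, Matrix.mulVec_smul, ← hu]
      rfl
    rw [he, norm_add_sq_real, real_inner_smul_right, hwq, norm_smul, mul_pow,
      Real.norm_eq_abs, sq_abs, hP_def, hR_def]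
    ring
  -- the two RIP inequalities
  have hI : ∀ t : ℝ, (1 - δ') * (U + t ^ 2 * N) ≤ P + 2 * t * q + t ^ 2 * R := by
    intro t
    have := (hRIP' (u + t • w) (hsparse t)).1
    rwa [hnorm1, hnorm2] at this
  have hII : ∀ t : ℝ, P + 2 * t * q + t ^ 2 * R ≤ (1 + δ') * (U + t ^ 2 * N) := by
    intro t
    have := (hRIP' (u + t • w) (hsparse t)).2
    rwa [hnorm1, hnorm2] at this
  -- the combination step
  set lam : ℝ := (c - 1) / (c + 1) with hlam_def
  have hlam0 : 0 < lam := by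
    apply div_pos <;> linarith
  have hlam1 : lam < 1 := by
    rw [hlam_def, div_lt_one (by linarith)]; linarith
  have hlam2 : lam ^ 2 < 1 := pow_lt_one₀ (le_of_lt hlam0) hlam1 (by norm_num)
  set t : ℝ := L * (1 - lam) / (2 * N) with ht_def
  have hL0 : 0 ≤ L := by
    rw [hL_def]; positivity
  have ht0 : 0 ≤ t := by
    rw [ht_def]; apply div_nonneg (mul_nonneg hL0 (by linarith)) (by positivity)
  set t' : ℝ := t / lam with ht'_def
  have htt' : t = lam * t' := by
    rw [ht'_def]; field_simp
  have hstep : (1 - δ' - lam ^ 2 * (1 + δ')) * U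
      ≤ (1 - lam ^ 2) * P - 2 * t * (1 + lam) * q + 2 * δ' * (N:ℝ) * t ^ 2 := by
    have h1 := hI (-t)
    have h2 := hII t'
    have h2' : lam ^ 2 * (P + 2 * t' * q + t' ^ 2 * R)
        ≤ lam ^ 2 * ((1 + δ') * (U + t' ^ 2 * N)) :=
      mul_le_mul_of_nonneg_left h2 (by positivity)
    rw [htt'] at h1 ⊢
    linarith [h1, h2']
  -- the middle term is nonpositive
  have hmid : (1 - lam ^ 2) * P - 2 * t * (1 + lam) * q ≤ 0 := by
    have h1 : (1 - lam ^ 2) * P ≤ (1 - lam ^ 2) * (L * α) := by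
      apply mul_le_mul_of_nonneg_left hPle (by linarith [hlam2])
    have h2 : 2 * t * (1 + lam) * ((N:ℝ) * α) ≤ 2 * t * (1 + lam) * q := by
      apply mul_le_mul_of_nonneg_left hq_ge
        (mul_nonneg (mul_nonneg (by norm_num) ht0) (by linarith))
    have h3 : 2 * t * (1 + lam) * ((N:ℝ) * α) = (1 - lam ^ 2) * (L * α) := by
      rw [ht_def]; field_simp; ring
    linarith
  -- hence the main bound
  have hmain : (1 - δ' - lam ^ 2 * (1 + δ')) * U * (2 * N) ≤ δ' * L ^ 2 * (1 - lam) ^ 2 := by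
    have h1 : 2 * δ' * (N:ℝ) * t ^ 2 = δ' * L ^ 2 * (1 - lam) ^ 2 / (2 * N) := by
      rw [ht_def]; field_simp
    have h2 : (1 - δ' - lam ^ 2 * (1 + δ')) * U ≤ δ' * L ^ 2 * (1 - lam) ^ 2 / (2 * N) := by
      have := hstep; rw [h1] at this; linarith [hmid]
    calc (1 - δ' - lam ^ 2 * (1 + δ')) * U * (2 * N)
        ≤ (δ' * L ^ 2 * (1 - lam) ^ 2 / (2 * N)) * (2 * N) := by
          apply mul_le_mul_of_nonneg_right h2 (by positivity)
      _ = δ' * L ^ 2 * (1 - lam) ^ 2 := by field_simp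
  -- L² ≤ K U
  have hLU : L ^ 2 ≤ (K : ℝ) * U := by
    have h1 : L ^ 2 ≤ ((T \ Λ).card : ℝ) * ∑ i ∈ T \ Λ, x i ^ 2 := by
      have := sq_sum_le_card_mul_sum_sq (s := T \ Λ) (f := fun i => |x i|)
      simpa [sq_abs] using this
    have h2 : ∑ i ∈ T \ Λ, x i ^ 2 ≤ U := by
      rw [hU_def, normsq]
      rw [show ∑ i ∈ T \ Λ, x i ^ 2 = ∑ i ∈ T \ Λ, u i ^ 2 from
        Finset.sum_congr rfl (fun i hi => by rw [huS i hi])]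
      apply Finset.sum_le_sum_of_subset_of_nonneg (Finset.subset_univ _)
      intro i _ _; positivity
    have hcard2 : ((T \ Λ).card : ℝ) ≤ (K : ℝ) := by
      exact_mod_cast le_trans (Finset.card_le_card (Finset.sdiff_subset)) hTK
    have hsum0 : 0 ≤ ∑ i ∈ T \ Λ, x i ^ 2 := by positivity
    calc L ^ 2 ≤ ((T \ Λ).card : ℝ) * ∑ i ∈ T \ Λ, x i ^ 2 := h1
      _ ≤ (K : ℝ) * ∑ i ∈ T \ Λ, x i ^ 2 := mul_le_mul_of_nonneg_right hcard2 hsum0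
      _ ≤ (K : ℝ) * U := mul_le_mul_of_nonneg_left h2 (by positivity)
  -- U > 0
  have hU0 : 0 < U := by
    obtain ⟨i₀, hi₀⟩ := hTΛ
    have hx0 : x i₀ ≠ 0 := (hT i₀).1 (Finset.mem_sdiff.1 hi₀).1
    have hui : u i₀ = x i₀ := huS i₀ hi₀
    rw [hU_def, normsq]
    have h1 : 0 < u i₀ ^ 2 := by rw [hui]; positivity
    have h2 : u i₀ ^ 2 ≤ ∑ i, u i ^ 2 := by
      apply Finset.single_le_sum (fun i _ => by positivity) (Finset.mem_univ i₀)
    linarith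
  -- final numeric contradiction
  have hNne : (N:ℝ) ≠ 0 := ne_of_gt hN0
  have hKc : (K:ℝ) = N * (c ^ 2 - 1) := by
    have h := hc2
    field_simp at h
    linear_combination -h
  have hδc : δ' * c < 1 := by
    rw [lt_div_iff₀ hc0] at hδ'lt
    linarith
  have e1 : lam * (c + 1) = c - 1 := by
    rw [hlam_def]; field_simp
  have e2 : lam ^ 2 * (c + 1) ^ 2 = (c - 1) ^ 2 := by
    rw [← mul_pow, e1]
  have e3 : (1 - lam) * (c + 1) = 2 := by linear_combination -e1
  have e4 : (1 - lam) ^ 2 * (c + 1) ^ 2 = 4 := by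
    rw [← mul_pow, e3]; norm_num
  have hpos : (0:ℝ) < (c + 1) ^ 2 := by positivity
  have key : δ' * (c ^ 2 - 1) * (1 - lam) ^ 2 < (1 - δ' - lam ^ 2 * (1 + δ')) * 2 := by
    have expand : ((1 - δ' - lam ^ 2 * (1 + δ')) * 2 - δ' * (c ^ 2 - 1) * (1 - lam) ^ 2)
        * (c + 1) ^ 2 = 8 * c * (1 - δ' * c) := by
      have h5 : ((1 - δ' - lam ^ 2 * (1 + δ')) * 2 - δ' * (c ^ 2 - 1) * (1 - lam) ^ 2)
          * (c + 1) ^ 2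
          = 2 * (1 - δ') * (c + 1) ^ 2 - 2 * (1 + δ') * (lam ^ 2 * (c + 1) ^ 2)
            - δ' * (c ^ 2 - 1) * ((1 - lam) ^ 2 * (c + 1) ^ 2) := by ring
      rw [h5, e2, e4]; ring
    have h8 : (0:ℝ) < 8 * c * (1 - δ' * c) := by
      apply mul_pos (by linarith) (by linarith)
    by_contra hX
    push_neg at hX
    have hle : ((1 - δ' - lam ^ 2 * (1 + δ')) * 2 - δ' * (c ^ 2 - 1) * (1 - lam) ^ 2)
        * (c + 1) ^ 2 ≤ 0 :=
      mul_nonpos_of_nonpos_of_nonneg (by linarith) (le_of_lt hpos)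
    rw [expand] at hle
    linarith
  have hG : δ' * K * (1 - lam) ^ 2 < (1 - δ' - lam ^ 2 * (1 + δ')) * (2 * N) := by
    rw [hKc]
    calc δ' * ((N:ℝ) * (c ^ 2 - 1)) * (1 - lam) ^ 2
        = (N:ℝ) * (δ' * (c ^ 2 - 1) * (1 - lam) ^ 2) := by ring
      _ < (N:ℝ) * ((1 - δ' - lam ^ 2 * (1 + δ')) * 2) := mul_lt_mul_of_pos_left key hN0
      _ = (1 - δ' - lam ^ 2 * (1 + δ')) * (2 * N) := by ring
  have hfinal : (1 - δ' - lam ^ 2 * (1 + δ')) * U * (2 * N) < (1 - δ' - lam ^ 2 * (1 + δ')) * U * (2 * N) := by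
    calc (1 - δ' - lam ^ 2 * (1 + δ')) * U * (2 * N)
        ≤ δ' * L ^ 2 * (1 - lam) ^ 2 := hmain
      _ ≤ δ' * ((K:ℝ) * U) * (1 - lam) ^ 2 := by
          apply mul_le_mul_of_nonneg_right _ (by positivity)
          exact mul_le_mul_of_nonneg_left hLU hδ'0
      _ = (δ' * K * (1 - lam) ^ 2) * U := by ring
      _ < ((1 - δ' - lam ^ 2 * (1 + δ')) * (2 * N)) * U := by
          exact mul_lt_mul_of_pos_right hG hU0
      _ = (1 - δ' - lam ^ 2 * (1 + δ')) * U * (2 * N) := by ring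
  exact lt_irrefl _ hfinal
end

section
/- Let K, N ≥ 1 be integers, set c = 1/√(K/N + 1), and let A be an m×n real matrix with unit Euclidean norm columns satisfying the restricted isometry property of order NK+1 with constant δ < c. Let x ∈ ℝⁿ have support T with |T| ≤ K, let ε ≥ 0, let e ∈ ℝᵐ satisfy ‖e‖₂ ≤ ε, and suppose every nonzero component of x satisfies |xᵢ| > (2√K · ε · c)/(c − δ). Set y = Ax + e. Then for every index set Λ ⊆ {1,…,n} with T \ Λ ≠ ∅ and |T ∪ Λ| + N ≤ NK + 1, and every set W ⊆ {1,…,n} with |W| = N and W ∩ (T ∪ Λ) = ∅, the residual r = y − P_Λ(y) satisfies max_{i∈T\Λ} |⟨Aeᵢ, r⟩| > min_{i∈W} |⟨Aeᵢ, r⟩|. (Consequently, the generalized orthogonal matching pursuit algorithm with stopping rule ‖r‖₂ ≤ ε selects at least one correct index in every iteration and recovers the correct support of x.) -/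
open scoped InnerProductSpace BigOperators

lemma toE_inner {m : ℕ} (u v : Fin m → ℝ) : ⟪toE u, toE v⟫_ℝ = ∑ i, u i * v i := by
  simp [toE, PiLp.inner_apply, RCLike.inner_apply, mul_comm]

lemma toE_normsq {m : ℕ} (u : Fin m → ℝ) : ‖toE u‖ ^ 2 = ∑ i, u i ^ 2 := by
  rw [EuclideanSpace.norm_eq, Real.sq_sqrt (by positivity)]
  simp [toE, sq_abs]

lemma sparsity_le {n : ℕ} {z : Fin n → ℝ} {Ω : Finset (Fin n)}
    (h : ∀ i, z i ≠ 0 → i ∈ Ω) : sparsity z ≤ Ω.card := by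
  apply Finset.card_le_card
  intro i hi
  simp only [Finset.mem_filter] at hi
  exact h i hi.2

lemma norm_toE_eq_zero {m : ℕ} {u : Fin m → ℝ} (h : ‖toE u‖ = 0) : u = 0 := by
  have := norm_eq_zero.mp h
  exact (WithLp.toLp_eq_zero (p := 2)).mp this

lemma rip_polar {m n s : ℕ} {A : Matrix (Fin m) (Fin n) ℝ} {δ : ℝ} (h : RIP A s δ)
    {Ω : Finset (Fin n)} (hΩ : Ω.card ≤ s)
    {u v : Fin n → ℝ} (hu : ∀ i, u i ≠ 0 → i ∈ Ω) (hv : ∀ i, v i ≠ 0 → i ∈ Ω) :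
    ⟪toE (A.mulVec u), toE (A.mulVec v)⟫_ℝ - (∑ i, u i * v i)
      ≤ δ * (‖toE u‖ * ‖toE v‖) := by
  -- base inequality for any pair supported in Ω
  have base : ∀ u' v' : Fin n → ℝ, (∀ i, u' i ≠ 0 → i ∈ Ω) → (∀ i, v' i ≠ 0 → i ∈ Ω) →
      ⟪toE (A.mulVec u'), toE (A.mulVec v')⟫_ℝ - (∑ i, u' i * v' i)
        ≤ δ * ((‖toE u'‖ ^ 2 + ‖toE v'‖ ^ 2) / 2) := by
    intro u' v' hu' hv'
    have hsupp1 : sparsity (u' + v') ≤ s := by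
      refine le_trans (sparsity_le (Ω := Ω) ?_) hΩ
      intro i hi
      by_cases h1 : u' i ≠ 0
      · exact hu' i h1
      · push_neg at h1
        exact hv' i (by simpa [Pi.add_apply, h1] using hi)
    have hsupp2 : sparsity (u' - v') ≤ s := by
      refine le_trans (sparsity_le (Ω := Ω) ?_) hΩ
      intro i hi
      by_cases h1 : u' i ≠ 0
      · exact hu' i h1
      · push_neg at h1
        exact hv' i (by simpa [Pi.sub_apply, h1] using hi)
    have h1 := (h (u' + v') hsupp1).2
    have h2 := (h (u' - v') hsupp2).1
    have e1 : toE (A.mulVec (u' + v')) = toE (A.mulVec u') + toE (A.mulVec v') := by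
      simp only [Matrix.mulVec_add]; rfl
    have e2 : toE (A.mulVec (u' - v')) = toE (A.mulVec u') - toE (A.mulVec v') := by
      simp only [Matrix.mulVec_sub]; rfl
    have e3 : toE (u' + v') = toE u' + toE v' := rfl
    have e4 : toE (u' - v') = toE u' - toE v' := rfl
    rw [e1, e3] at h1
    rw [e2, e4] at h2
    have n1 : ‖toE (A.mulVec u') + toE (A.mulVec v')‖ ^ 2
        = ‖toE (A.mulVec u')‖ ^ 2 + 2 * ⟪toE (A.mulVec u'), toE (A.mulVec v')⟫_ℝ
          + ‖toE (A.mulVec v')‖ ^ 2 := norm_add_sq_real _ _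
    have n2 : ‖toE (A.mulVec u') - toE (A.mulVec v')‖ ^ 2
        = ‖toE (A.mulVec u')‖ ^ 2 - 2 * ⟪toE (A.mulVec u'), toE (A.mulVec v')⟫_ℝ
          + ‖toE (A.mulVec v')‖ ^ 2 := norm_sub_sq_real _ _
    have n3 : ‖toE u' + toE v'‖ ^ 2
        = ‖toE u'‖ ^ 2 + 2 * ⟪toE u', toE v'⟫_ℝ + ‖toE v'‖ ^ 2 := norm_add_sq_real _ _
    have n4 : ‖toE u' - toE v'‖ ^ 2
        = ‖toE u'‖ ^ 2 - 2 * ⟪toE u', toE v'⟫_ℝ + ‖toE v'‖ ^ 2 := norm_sub_sq_real _ _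
    have ip : ⟪toE u', toE v'⟫_ℝ = ∑ i, u' i * v' i := toE_inner _ _
    rw [n1, n3] at h1
    rw [n2, n4] at h2
    rw [ip] at h1 h2
    linarith
  by_cases hu0 : u = 0
  · subst hu0
    simp [toE_inner, toE, Matrix.mulVec_zero]
  by_cases hv0 : v = 0
  · subst hv0
    simp [toE_inner, toE, Matrix.mulVec_zero]
  set a := ‖toE u‖ with ha_def
  set b := ‖toE v‖ with hb_def
  have ha : 0 < a := by
    rw [ha_def]
    rw [norm_pos_iff]
    exact fun hc => hu0 ((WithLp.toLp_eq_zero (p := 2)).mp hc)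
  have hb : 0 < b := by
    rw [hb_def]
    rw [norm_pos_iff]
    exact fun hc => hv0 ((WithLp.toLp_eq_zero (p := 2)).mp hc)
  have hu' : ∀ i, (b • u) i ≠ 0 → i ∈ Ω := by
    intro i hi
    apply hu
    intro hc
    apply hi
    simp [hc]
  have hv' : ∀ i, (a • v) i ≠ 0 → i ∈ Ω := by
    intro i hi
    apply hv
    intro hc
    apply hi
    simp [hc]
  have hbase := base (b • u) (a • v) hu' hv'
  have em1 : toE (A.mulVec (b • u)) = b • toE (A.mulVec u) := by
    rw [Matrix.mulVec_smul]; rfl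
  have em2 : toE (A.mulVec (a • v)) = a • toE (A.mulVec v) := by
    rw [Matrix.mulVec_smul]; rfl
  have et1 : toE (b • u) = b • toE u := rfl
  have et2 : toE (a • v) = a • toE v := rfl
  rw [em1, em2, et1, et2, real_inner_smul_left, real_inner_smul_right] at hbase
  have hsum : ∑ i, (b • u) i * (a • v) i = (b * a) * ∑ i, u i * v i := by
    rw [Finset.mul_sum]
    apply Finset.sum_congr rfl
    intro i _
    simp [Pi.smul_apply, smul_eq_mul]
    ring
  rw [hsum] at hbase
  have hn1 : ‖b • toE u‖ = b * a := by
    rw [norm_smul, Real.norm_eq_abs, abs_of_pos hb]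
  have hn2 : ‖a • toE v‖ = a * b := by
    rw [norm_smul, Real.norm_eq_abs, abs_of_pos ha]
  rw [hn1, hn2] at hbase
  have hab : 0 < a * b := mul_pos ha hb
  nlinarith [hbase, hab]

lemma mulVec_toE_sum {m n : ℕ} (A : Matrix (Fin m) (Fin n) ℝ) (w : Fin n → ℝ) :
    toE (A.mulVec w) = ∑ i, w i • col A i := by
  ext j
  rw [WithLp.ofLp_sum, Finset.sum_apply]
  simp [toE, col, Matrix.mulVec, dotProduct, Pi.smul_apply, mul_comm]

lemma inner_mulVec_left {m n : ℕ} (A : Matrix (Fin m) (Fin n) ℝ) (w : Fin n → ℝ)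
    (y : EuclideanSpace ℝ (Fin m)) :
    ⟪toE (A.mulVec w), y⟫_ℝ = ∑ i, w i * ⟪col A i, y⟫_ℝ := by
  rw [mulVec_toE_sum, sum_inner]
  apply Finset.sum_congr rfl
  intro i _
  rw [real_inner_smul_left]

lemma mem_span_of_supp {m n : ℕ} (A : Matrix (Fin m) (Fin n) ℝ) (Λ : Finset (Fin n))
    (w : Fin n → ℝ) (hw : ∀ i, w i ≠ 0 → i ∈ Λ) :
    toE (A.mulVec w) ∈ Submodule.span ℝ ((fun j => col A j) '' (Λ : Set (Fin n))) := by
  rw [mulVec_toE_sum]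
  apply Submodule.sum_mem
  intro i _
  by_cases hi : w i = 0
  · simp [hi]
  · exact Submodule.smul_mem _ _ (Submodule.subset_span ⟨i, hw i hi, rfl⟩)

lemma exists_coeff {m n : ℕ} (A : Matrix (Fin m) (Fin n) ℝ) (Λ : Finset (Fin n))
    (u : EuclideanSpace ℝ (Fin m))
    (hu : u ∈ Submodule.span ℝ ((fun j => col A j) '' (Λ : Set (Fin n)))) :
    ∃ w : Fin n → ℝ, (∀ i, w i ≠ 0 → i ∈ Λ) ∧ toE (A.mulVec w) = u := by
  rw [Finsupp.mem_span_image_iff_linearCombination] at hu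
  obtain ⟨l, hl, hlu⟩ := hu
  refine ⟨fun i => l i, ?_, ?_⟩
  · intro i hi
    have := hl (Finsupp.mem_support_iff.mpr hi)
    simpa using this
  · rw [mulVec_toE_sum, ← hlu, Finsupp.linearCombination_apply, Finsupp.sum]
    rw [Finset.sum_subset (Finset.subset_univ l.support)]
    intro i _ hi
    rw [Finsupp.notMem_support_iff.mp hi, zero_smul]


section proj
variable {m n : ℕ} (A : Matrix (Fin m) (Fin n) ℝ) (Λ : Finset (Fin n))

lemma proj_add (a b : EuclideanSpace ℝ (Fin m)) :
    projSpan A Λ (a + b) = projSpan A Λ a + projSpan A Λ b := by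
  simp [projSpan, map_add]

lemma proj_self {u : EuclideanSpace ℝ (Fin m)}
    (hu : u ∈ Submodule.span ℝ ((fun j => col A j) '' (Λ : Set (Fin n)))) :
    projSpan A Λ u = u :=
  Submodule.starProjection_eq_self_iff.mpr hu

lemma residual_orth (u : EuclideanSpace ℝ (Fin m)) :
    u - projSpan A Λ u ∈ (Submodule.span ℝ ((fun j => col A j) '' (Λ : Set (Fin n))))ᗮ :=
  Submodule.sub_starProjection_mem_orthogonal u

lemma residual_norm_le (u : EuclideanSpace ℝ (Fin m)) :
    ‖u - projSpan A Λ u‖ ≤ ‖u‖ := by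
  have h1 : ⟪(projSpan A Λ u : EuclideanSpace ℝ (Fin m)), u - projSpan A Λ u⟫_ℝ = 0 := by
    have hm := residual_orth A Λ u
    exact hm _ (SetLike.coe_mem _)
  have h2 : ‖u‖ ^ 2 = ‖projSpan A Λ u‖ ^ 2 + ‖u - projSpan A Λ u‖ ^ 2 := by
    have : u = projSpan A Λ u + (u - projSpan A Λ u) := by abel
    nth_rewrite 1 [this]
    rw [norm_add_sq_real, h1]
    ring
  nlinarith [norm_nonneg (u - projSpan A Λ u), norm_nonneg u, norm_nonneg (projSpan A Λ u)]
end proj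

lemma aux_cs2 (a b p q : ℝ) : (a*p + b*q)^2 ≤ (a^2 + b^2) * (p^2 + q^2) := by
  nlinarith [sq_nonneg (a*q - b*p)]

lemma aux_sq_mono {a b : ℝ} (ha : 0 ≤ a) (h : a ≤ b) : a^2 ≤ b^2 := by nlinarith

lemma aux_le_of_sq_le {a c : ℝ} (ha : 0 < a) (h : a^2 ≤ c * a) : a ≤ c := by nlinarith

lemma aux_sq_le_one_mul {d z : ℝ} (h0 : 0 ≤ d) (h1 : d ≤ 1) (hz : 0 ≤ z) :
    d^2 * z ≤ z := by
  nlinarith [mul_nonneg (mul_nonneg (by linarith : (0:ℝ) ≤ 1 - d)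
    (by linarith : (0:ℝ) ≤ 1 + d)) hz]


set_option maxHeartbeats 2000000 in
/-- Theorem 5 of Chen–Ge (noisy case, per-iteration guarantee): let `c = 1/√(K/N+1)`.
If `A` has unit-norm columns and satisfies the RIP of order `NK+1` with constant `δ < c`,
`x` has support `T` with `|T| ≤ K`, `‖e‖₂ ≤ ε`, every nonzero component of `x` exceeds
`2√K ε c / (c − δ)` in magnitude, and `y = Ax + e`, then for any `Λ` with `T \ Λ ≠ ∅` and
`|T ∪ Λ| + N ≤ NK+1`, and any `W` of size `N` disjoint from `T ∪ Λ`, the residual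
`r = y − P_Λ(y)` satisfies `max_{i∈T\Λ} |⟨Aeᵢ, r⟩| > min_{i∈W} |⟨Aeᵢ, r⟩|`. -/
theorem stmt13 {m n : ℕ} (K N : ℕ) (hK : 1 ≤ K) (hN : 1 ≤ N)
    (A : Matrix (Fin m) (Fin n) ℝ) (hcol : ∀ j, ‖col A j‖ = 1)
    (δ : ℝ) (hδ : δ < 1 / Real.sqrt ((K : ℝ) / N + 1))
    (hRIP : RIP A (N * K + 1) δ)
    (x : Fin n → ℝ) (T : Finset (Fin n)) (hT : ∀ i, i ∈ T ↔ x i ≠ 0) (hTK : T.card ≤ K)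
    (ε : ℝ) (hε : 0 ≤ ε) (e : EuclideanSpace ℝ (Fin m)) (he : ‖e‖ ≤ ε)
    (hxmin : ∀ i, x i ≠ 0 →
      2 * Real.sqrt K * ε * (1 / Real.sqrt ((K : ℝ) / N + 1))
          / (1 / Real.sqrt ((K : ℝ) / N + 1) - δ) < |x i|)
    (Λ : Finset (Fin n)) (hTΛ : (T \ Λ).Nonempty)
    (hcard : (T ∪ Λ).card + N ≤ N * K + 1)
    (W : Finset (Fin n)) (hWcard : W.card = N) (hWne : W.Nonempty)
    (hWdis : Disjoint W (T ∪ Λ)) :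
    W.inf' hWne (fun i =>
        |⟪col A i, (toE (A.mulVec x) + e)
            - projSpan A Λ (toE (A.mulVec x) + e)⟫_ℝ|)
      < (T \ Λ).sup' hTΛ (fun i =>
        |⟪col A i, (toE (A.mulVec x) + e)
            - projSpan A Λ (toE (A.mulVec x) + e)⟫_ℝ|) := by
  classical
  -- Basic numeric facts about c = 1/√(K/N+1)
  have hN0 : (0:ℝ) < N := by exact_mod_cast hN
  have hK0 : (0:ℝ) < K := by exact_mod_cast hK
  set sc := Real.sqrt ((K : ℝ) / N + 1) with hsc_def
  have hKN1 : (1:ℝ) < (K:ℝ)/N + 1 := by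
    have : (0:ℝ) < (K:ℝ)/N := div_pos hK0 hN0
    linarith
  have hsc1 : 1 < sc := by
    rw [hsc_def]
    have h1 : Real.sqrt 1 = 1 := Real.sqrt_one
    calc (1:ℝ) = Real.sqrt 1 := h1.symm
      _ < Real.sqrt ((K:ℝ)/N + 1) := Real.sqrt_lt_sqrt (by norm_num) hKN1
  have hsc0 : 0 < sc := by linarith
  have hc0 : 0 < 1 / sc := by positivity
  have hc1 : 1 / sc < 1 := by
    rw [div_lt_one hsc0]; exact hsc1
  have hδ1 : δ < 1 := lt_trans hδ hc1
  have hcδ : 0 < 1 / sc - δ := by linarith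
  -- the support set S
  set S : Finset (Fin n) := T \ Λ with hS_def
  obtain ⟨i₀, hi₀S⟩ := hTΛ
  have hi₀T : i₀ ∈ T := (Finset.mem_sdiff.mp hi₀S).1
  have hi₀x : x i₀ ≠ 0 := (hT i₀).mp hi₀T
  -- δ is nonnegative
  have hδ0 : 0 ≤ δ := by
    have hsp : sparsity (Pi.single i₀ (1:ℝ)) ≤ N * K + 1 := by
      refine le_trans (sparsity_le (Ω := {i₀}) ?_) ?_
      · intro i hi
        by_contra hne
        simp only [Finset.mem_singleton] at hne
        exact hi (Pi.single_eq_of_ne hne 1)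
      · simp only [Finset.card_singleton]
        exact Nat.succ_le_succ (Nat.zero_le _)
    have h1 := (hRIP (Pi.single i₀ (1:ℝ)) hsp).1
    have hAz : toE (A.mulVec (Pi.single i₀ (1:ℝ))) = col A i₀ := by
      rw [mulVec_toE_sum]
      rw [Finset.sum_eq_single i₀]
      · simp
      · intro b _ hb
        rw [Pi.single_eq_of_ne hb, zero_smul]
      · simp
    rw [hAz, hcol i₀] at h1
    have hz1 : ‖toE (Pi.single i₀ (1:ℝ))‖ ^ 2 = 1 := by
      rw [toE_normsq]
      rw [Finset.sum_eq_single i₀]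
      · simp
      · intro b _ hb
        rw [Pi.single_eq_of_ne hb]; norm_num
      · simp
    rw [hz1] at h1
    linarith
  -- decomposition of x
  set x' : Fin n → ℝ := fun i => if i ∈ S then x i else 0 with hx'_def
  set x'' : Fin n → ℝ := fun i => if i ∈ S then 0 else x i with hx''_def
  have hxsplit : x = x' + x'' := by
    funext i
    by_cases hi : i ∈ S <;> simp [hx'_def, hx''_def, hi]
  have hx''supp : ∀ i, x'' i ≠ 0 → i ∈ Λ := by
    intro i hi
    rw [hx''_def] at hi
    by_cases hiS : i ∈ S
    · simp [hiS] at hi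
    · simp [hiS] at hi
      have hiT : i ∈ T := (hT i).mpr hi
      by_contra hiΛ
      exact hiS (Finset.mem_sdiff.mpr ⟨hiT, hiΛ⟩)
  have hx'supp : ∀ i, x' i ≠ 0 → i ∈ S := by
    intro i hi
    rw [hx'_def] at hi
    by_cases hiS : i ∈ S
    · exact hiS
    · simp [hiS] at hi
  -- the coefficient vector for the projection of A x'
  set Sp := Submodule.span ℝ ((fun j => col A j) '' (Λ : Set (Fin n))) with hSp_def
  set vx : EuclideanSpace ℝ (Fin m) := toE (A.mulVec x') with hvx_def
  obtain ⟨w, hwsupp, hwA⟩ := exists_coeff A Λ (projSpan A Λ vx)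
    (by rw [hSp_def] at *; exact SetLike.coe_mem _)
  set z : Fin n → ℝ := x' - w with hz_def
  set v : EuclideanSpace ℝ (Fin m) := toE (A.mulVec z) with hv_def
  have hvres : v = vx - projSpan A Λ vx := by
    rw [hv_def, hz_def]
    have : toE (A.mulVec (x' - w)) = toE (A.mulVec x') - toE (A.mulVec w) := by
      simp only [Matrix.mulVec_sub]; rfl
    rw [this, hwA, hvx_def]
  set q : Fin n → ℝ := fun i => ⟪col A i, v⟫_ℝ with hq_def
  -- q vanishes on Λ
  have hqΛ : ∀ i ∈ Λ, q i = 0 := by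
    intro i hi
    rw [hq_def]
    simp only
    rw [hvres]
    exact residual_orth A Λ vx (col A i)
      (Submodule.subset_span ⟨i, by simpa using hi, rfl⟩)
  -- the big index set
  set Ω : Finset (Fin n) := (T ∪ Λ) ∪ W with hΩ_def
  have hdisj : Disjoint (T ∪ Λ) W := hWdis.symm
  have hΩcard : Ω.card ≤ N * K + 1 := by
    rw [hΩ_def, Finset.card_union_of_disjoint hdisj, hWcard]
    exact hcard
  have hSsub : S ⊆ T ∪ Λ := by
    rw [hS_def]
    exact le_trans (Finset.sdiff_subset) Finset.subset_union_left
  have hzsupp : ∀ i, z i ≠ 0 → i ∈ Ω := by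
    intro i hi
    rw [hz_def] at hi
    simp only [Pi.sub_apply] at hi
    rw [hΩ_def]
    by_cases h1 : x' i = 0
    · rw [h1, zero_sub, neg_ne_zero] at hi
      exact Finset.mem_union_left _ (Finset.mem_union_right _ (hwsupp i hi))
    · exact Finset.mem_union_left _ (hSsub (hx'supp i h1))
  -- the perturbation vector h'
  set h' : Fin n → ℝ := fun i => if i ∈ Ω then q i - z i else 0 with hh'_def
  have hh'supp : ∀ i, h' i ≠ 0 → i ∈ Ω := by
    intro i hi
    rw [hh'_def] at hi
    by_cases h1 : i ∈ Ω
    · exact h1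
    · simp [h1] at hi
  -- key application of the RIP polarization inequality
  have hAh'q : ⟪toE (A.mulVec h'), v⟫_ℝ = ∑ i, h' i * q i := by
    rw [hv_def, inner_mulVec_left]
  have hnh2 : ‖toE h'‖ ^ 2 = ∑ i, h' i ^ 2 := toE_normsq h'
  have hsum_h2 : ∑ i, h' i ^ 2 = (∑ i, h' i * q i) - ∑ i, h' i * z i := by
    rw [← Finset.sum_sub_distrib]
    apply Finset.sum_congr rfl
    intro i _
    by_cases h1 : i ∈ Ω
    · simp only [hh'_def, h1, if_pos]
      ring
    · simp [hh'_def, h1]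
  have hpolar := rip_polar hRIP hΩcard hh'supp hzsupp
  rw [hAh'q] at hpolar
  have hzq : ∑ i, h' i * z i = ∑ i : Fin n, h' i * z i := rfl
  have hHle : ‖toE h'‖ ^ 2 ≤ δ * (‖toE h'‖ * ‖toE z‖) := by
    rw [hnh2, hsum_h2]
    linarith [hpolar]
  have hHz : ‖toE h'‖ ≤ δ * ‖toE z‖ := by
    by_cases h0 : ‖toE h'‖ = 0
    · rw [h0]; positivity
    · have hpos : 0 < ‖toE h'‖ := lt_of_le_of_ne (norm_nonneg _) (Ne.symm h0)
      apply aux_le_of_sq_le hpos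
      calc ‖toE h'‖ ^ 2 ≤ δ * (‖toE h'‖ * ‖toE z‖) := hHle
        _ = δ * ‖toE z‖ * ‖toE h'‖ := by ring
  -- scalar sums
  set X2 : ℝ := ∑ i ∈ S, x i ^ 2 with hX2_def
  set HS2 : ℝ := ∑ i ∈ S, h' i ^ 2 with hHS2_def
  set HW2 : ℝ := ∑ i ∈ W, h' i ^ 2 with hHW2_def
  set ZL2 : ℝ := ∑ i ∈ Λ, z i ^ 2 with hZL2_def
  have hX2nn : 0 ≤ X2 := Finset.sum_nonneg fun i _ => sq_nonneg _
  have hHS2nn : 0 ≤ HS2 := Finset.sum_nonneg fun i _ => sq_nonneg _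
  have hHW2nn : 0 ≤ HW2 := Finset.sum_nonneg fun i _ => sq_nonneg _
  have hZL2nn : 0 ≤ ZL2 := Finset.sum_nonneg fun i _ => sq_nonneg _
  have hSdisΛ : Disjoint S Λ := by rw [hS_def]; exact Finset.sdiff_disjoint
  have hzS : ∀ i ∈ S, z i = x i := by
    intro i hi
    rw [hz_def]
    simp only [Pi.sub_apply]
    have h1 : x' i = x i := by rw [hx'_def]; simp [hi]
    have h2 : w i = 0 := by
      by_contra h2
      exact (Finset.disjoint_left.mp hSdisΛ hi) (hwsupp i h2)
    rw [h1, h2, sub_zero]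
  -- norm of z
  have hz2 : ‖toE z‖ ^ 2 = X2 + ZL2 := by
    rw [toE_normsq]
    rw [← Finset.sum_subset (Finset.subset_univ (S ∪ Λ)) (by
      intro i _ hi
      have hz0 : z i = 0 := by
        by_contra h0
        apply hi
        by_cases h1 : x' i = 0
        · refine Finset.mem_union_right _ (hwsupp i ?_)
          intro hw
          apply h0
          rw [hz_def]
          simp [h1, hw]
        · exact Finset.mem_union_left _ (hx'supp i h1)
      rw [hz0]; norm_num)]
    rw [Finset.sum_union hSdisΛ]
    congr 1
    · apply Finset.sum_congr rfl
      intro i hi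
      rw [hzS i hi]
  -- norm of h'
  have hTΛeq : S ∪ Λ = T ∪ Λ := by rw [hS_def]; exact Finset.sdiff_union_self_eq_union
  have hh2 : ‖toE h'‖ ^ 2 = HS2 + ZL2 + HW2 := by
    rw [toE_normsq]
    rw [← Finset.sum_subset (Finset.subset_univ Ω) (by
      intro i _ hi
      have : h' i = 0 := by
        by_contra h0
        exact hi (hh'supp i h0)
      rw [this]; norm_num)]
    rw [hΩ_def, Finset.sum_union hdisj, ← hTΛeq, Finset.sum_union hSdisΛ]
    have hΛh : ∑ i ∈ Λ, h' i ^ 2 = ZL2 := by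
      apply Finset.sum_congr rfl
      intro i hi
      have hiΩ : i ∈ Ω := by
        rw [hΩ_def]
        exact Finset.mem_union_left _ (Finset.mem_union_right _ hi)
      rw [hh'_def]
      simp only [hiΩ, if_pos]
      rw [hqΛ i hi]
      ring
    rw [hΛh]
  -- the key quadratic bound
  have key3 : HS2 + HW2 ≤ δ ^ 2 * X2 := by
    have hsq : ‖toE h'‖ ^ 2 ≤ (δ * ‖toE z‖) ^ 2 :=
      aux_sq_mono (norm_nonneg _) hHz
    rw [hh2] at hsq
    have hz2' : (δ * ‖toE z‖) ^ 2 = δ ^ 2 * (X2 + ZL2) := by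
      rw [mul_pow, hz2]
    rw [hz2'] at hsq
    have hd1 : δ ^ 2 * ZL2 ≤ ZL2 := aux_sq_le_one_mul hδ0 (le_of_lt hδ1) hZL2nn
    have hexp : δ ^ 2 * (X2 + ZL2) = δ ^ 2 * X2 + δ ^ 2 * ZL2 := by ring
    linarith
  -- cardinality facts
  set t : ℝ := (S.card : ℝ) with ht_def
  have ht1 : 1 ≤ t := by
    rw [ht_def]
    have : 0 < S.card := Finset.card_pos.mpr ⟨i₀, hi₀S⟩
    exact_mod_cast this
  have htK : t ≤ (K : ℝ) := by
    rw [ht_def]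
    have h1 : S.card ≤ T.card := Finset.card_le_card (by rw [hS_def]; exact Finset.sdiff_subset)
    exact_mod_cast le_trans h1 hTK
  set st : ℝ := Real.sqrt t with hst_def
  set sN : ℝ := Real.sqrt N with hsN_def
  set sK : ℝ := Real.sqrt K with hsK_def
  have hst1 : 1 ≤ st := by
    rw [hst_def, show (1:ℝ) = Real.sqrt 1 from Real.sqrt_one.symm]
    exact Real.sqrt_le_sqrt ht1
  have hstpos : 0 < st := lt_of_lt_of_le one_pos hst1
  have hsNpos : 0 < sN := by rw [hsN_def]; exact Real.sqrt_pos.mpr hN0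
  have hsKpos : 0 < sK := by rw [hsK_def]; exact Real.sqrt_pos.mpr hK0
  have hstK : st ≤ sK := by
    rw [hst_def, hsK_def]
    exact Real.sqrt_le_sqrt htK
  have hst2 : st ^ 2 = t := Real.sq_sqrt (by linarith)
  have hsN2 : sN ^ 2 = (N : ℝ) := Real.sq_sqrt (le_of_lt hN0)
  have hsK2 : sK ^ 2 = (K : ℝ) := Real.sq_sqrt (le_of_lt hK0)
  have hsc2 : sc ^ 2 = (K : ℝ)/N + 1 := Real.sq_sqrt (by linarith)
  -- the extremal statistics
  set α0 : ℝ := S.sup' hTΛ (fun i => |q i|) with hα0_def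
  set β0 : ℝ := W.inf' hWne (fun i => |q i|) with hβ0_def
  have hα0nn : 0 ≤ α0 := by
    have h1 : |q i₀| ≤ α0 := Finset.le_sup' (fun i => |q i|) hi₀S
    linarith [abs_nonneg (q i₀)]
  obtain ⟨j₀, hj₀W, hj₀⟩ := Finset.exists_mem_eq_inf' hWne (fun i => |q i|)
  have hβ0nn : 0 ≤ β0 := by rw [hβ0_def, hj₀]; exact abs_nonneg _
  have hqle : ∀ i ∈ S, |q i| ≤ α0 := by
    intro i hi
    rw [hα0_def]
    exact Finset.le_sup' (fun i => |q i|) hi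
  have hβle : ∀ i ∈ W, β0 ≤ |q i| := by
    intro i hi
    rw [hβ0_def]
    exact Finset.inf'_le (fun i => |q i|) hi
  -- values on W
  have hqW : ∀ i ∈ W, q i = h' i := by
    intro i hi
    have hiΩ : i ∈ Ω := by rw [hΩ_def]; exact Finset.mem_union_right _ hi
    have hiTΛ : i ∉ T ∪ Λ := Finset.disjoint_left.mp hWdis hi
    have hz0 : z i = 0 := by
      by_contra h0
      by_cases h1 : x' i = 0
      · refine hiTΛ (Finset.mem_union_right _ (hwsupp i ?_))
        intro hw
        apply h0
        rw [hz_def]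
        simp [h1, hw]
      · exact hiTΛ (hSsub (hx'supp i h1))
    rw [hh'_def]
    simp only [hiΩ, if_pos]
    rw [hz0, sub_zero]
  -- F2 : N β0² ≤ HW2
  have F2 : (N : ℝ) * β0 ^ 2 ≤ HW2 := by
    have h1 : ∑ i ∈ W, β0 ^ 2 = (N : ℝ) * β0 ^ 2 := by
      rw [Finset.sum_const, hWcard, nsmul_eq_mul]
    rw [← h1, hHW2_def]
    apply Finset.sum_le_sum
    intro i hi
    have h2 : β0 ≤ |q i| := hβle i hi
    have h3 : β0 ^ 2 ≤ |q i| ^ 2 := aux_sq_mono hβ0nn h2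
    rw [sq_abs, hqW i hi] at h3
    exact h3
  -- the value X
  set X : ℝ := Real.sqrt X2 with hX_def
  have hXi₀ : |x i₀| ≤ X := by
    rw [hX_def, show |x i₀| = Real.sqrt (x i₀ ^ 2) from (Real.sqrt_sq_eq_abs _).symm]
    exact Real.sqrt_le_sqrt (Finset.single_le_sum (fun i _ => sq_nonneg (x i)) hi₀S)
  have hX2pos : 0 < X2 := by
    have h1 : x i₀ ^ 2 ≤ X2 := Finset.single_le_sum (fun i _ => sq_nonneg (x i)) hi₀S
    have h2 : 0 < x i₀ ^ 2 := by positivity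
    linarith
  have hXpos : 0 < X := by rw [hX_def]; exact Real.sqrt_pos.mpr hX2pos
  have hX2eq : X ^ 2 = X2 := Real.sq_sqrt (le_of_lt hX2pos)
  -- values of q on S
  have hqS : ∀ i ∈ S, q i = x i + h' i := by
    intro i hi
    have hiΩ : i ∈ Ω := by rw [hΩ_def]; exact Finset.mem_union_left _ (hSsub hi)
    have h1 : h' i = q i - z i := by rw [hh'_def]; simp [hiΩ]
    rw [h1, hzS i hi]
    ring
  set HS : ℝ := Real.sqrt HS2 with hHS_def
  set HW : ℝ := Real.sqrt HW2 with hHW_def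
  have hHSnn : 0 ≤ HS := Real.sqrt_nonneg _
  have hHWnn : 0 ≤ HW := Real.sqrt_nonneg _
  have hHS2eq : HS ^ 2 = HS2 := Real.sq_sqrt hHS2nn
  have hHW2eq : HW ^ 2 = HW2 := Real.sq_sqrt hHW2nn
  -- F1 : X2 - X * HS ≤ α0 * (st * X)
  have stepA : ∑ i ∈ S, x i * q i ≤ α0 * ∑ i ∈ S, |x i| := by
    rw [Finset.mul_sum]
    apply Finset.sum_le_sum
    intro i hi
    calc x i * q i ≤ |x i * q i| := le_abs_self _
      _ = |x i| * |q i| := abs_mul _ _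
      _ ≤ |x i| * α0 := mul_le_mul_of_nonneg_left (hqle i hi) (abs_nonneg _)
      _ = α0 * |x i| := mul_comm _ _
  have stepB : ∑ i ∈ S, |x i| ≤ st * X := by
    have h1 : (∑ i ∈ S, |x i|) ^ 2 ≤ t * X2 := by
      have h2 := Finset.sum_mul_sq_le_sq_mul_sq S (fun _ => 1) (fun i => |x i|)
      simp only [one_mul, one_pow, sq_abs] at h2
      rw [Finset.sum_const, nsmul_eq_mul, mul_one] at h2
      rw [← ht_def] at h2
      exact h2
    have h3 : ∑ i ∈ S, |x i| = Real.sqrt ((∑ i ∈ S, |x i|) ^ 2) :=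
      (Real.sqrt_sq (Finset.sum_nonneg fun i _ => abs_nonneg _)).symm
    rw [h3, hst_def, hX_def, ← Real.sqrt_mul (by linarith : (0:ℝ) ≤ t)]
    exact Real.sqrt_le_sqrt h1
  have stepC : ∑ i ∈ S, x i * q i = X2 + ∑ i ∈ S, x i * h' i := by
    rw [hX2_def, ← Finset.sum_add_distrib]
    apply Finset.sum_congr rfl
    intro i hi
    rw [hqS i hi]
    ring
  have stepD : -(X * HS) ≤ ∑ i ∈ S, x i * h' i := by
    have h1 : (∑ i ∈ S, x i * h' i) ^ 2 ≤ X2 * HS2 := by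
      have := Finset.sum_mul_sq_le_sq_mul_sq S (fun i => x i) (fun i => h' i)
      rw [← hX2_def, ← hHS2_def] at this
      exact this
    have h2 : |∑ i ∈ S, x i * h' i| ≤ X * HS := by
      rw [← Real.sqrt_sq_eq_abs]
      rw [hX_def, hHS_def, ← Real.sqrt_mul hX2nn]
      exact Real.sqrt_le_sqrt h1
    linarith [neg_abs_le (∑ i ∈ S, x i * h' i)]
  have F1 : X2 - X * HS ≤ α0 * (st * X) := by
    have h1 : α0 * ∑ i ∈ S, |x i| ≤ α0 * (st * X) :=
      mul_le_mul_of_nonneg_left stepB hα0nn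
    have h2 := stepA
    rw [stepC] at h2
    linarith
  -- divided forms
  have a_bound : X - HS ≤ α0 * st := by
    have h1 : X * (X - HS) ≤ X * (α0 * st) := by
      have hXX : X * X = X2 := by rw [← hX2eq]; ring
      have e1 : X * (X - HS) = X * X - X * HS := by ring
      have e2 : X * (α0 * st) = α0 * (st * X) := by ring
      rw [e1, e2, hXX]
      linarith
    exact le_of_mul_le_mul_left h1 hXpos
  have β_bound : β0 * sN ≤ HW := by
    have h1 : (β0 * sN) ^ 2 ≤ HW ^ 2 := by
      rw [hHW2eq, mul_pow, hsN2]
      linarith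
    have h2 : 0 ≤ β0 * sN := mul_nonneg hβ0nn (le_of_lt hsNpos)
    exact (pow_le_pow_iff_left₀ h2 hHWnn two_ne_zero).mp h1
  -- step3 : HS * sN + HW * st ≤ sc * δ * X * sN
  have step3 : HS * sN + HW * st ≤ sc * δ * X * sN := by
    have h1 : (HS * sN + HW * st) ^ 2 ≤ (HS2 + HW2) * ((N : ℝ) + t) := by
      have := aux_cs2 HS HW sN st
      rw [hHS2eq, hHW2eq, hsN2, hst2] at this
      exact this
    have h2 : (HS2 + HW2) * ((N : ℝ) + t) ≤ δ ^ 2 * X2 * ((N : ℝ) + t) := by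
      apply mul_le_mul_of_nonneg_right key3
      linarith
    have h3 : δ ^ 2 * X2 * ((N : ℝ) + t) ≤ (sc * δ * X * sN) ^ 2 := by
      have he : (sc * δ * X * sN) ^ 2 = δ ^ 2 * X2 * ((K:ℝ) + (N:ℝ)) := by
        rw [mul_pow, mul_pow, mul_pow, hsc2, hsN2, hX2eq]
        field_simp
      rw [he]
      have hNt : (N:ℝ) + t ≤ (K:ℝ) + N := by linarith
      exact mul_le_mul_of_nonneg_left hNt (by positivity)
    have h4 : 0 ≤ HS * sN + HW * st := add_nonneg (mul_nonneg hHSnn hsNpos.le) (mul_nonneg hHWnn hstpos.le)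
    have h5 : 0 ≤ sc * δ * X * sN := by positivity
    have hab : (HS * sN + HW * st) ^ 2 ≤ (sc * δ * X * sN) ^ 2 := by linarith
    exact (pow_le_pow_iff_left₀ h4 h5 two_ne_zero).mp hab
  -- the main gap bound : β0 + 2 ε < α0
  have hg : 0 < 1 - δ * sc := by
    have : δ * sc < (1/sc) * sc := by
      apply mul_lt_mul_of_pos_right hδ hsc0
    rw [one_div, inv_mul_cancel₀ (ne_of_gt hsc0)] at this
    linarith
  have hxm := hxmin i₀ hi₀x
  have hxm' : 2 * sK * ε / (1 - δ * sc) < X := by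
    have heq : 2 * sK * ε * (1/sc) / (1/sc - δ) = 2 * sK * ε / (1 - δ * sc) := by
      have h2 : (1:ℝ)/sc - δ ≠ 0 := ne_of_gt hcδ
      have h3 : (1:ℝ) - δ*sc ≠ 0 := ne_of_gt hg
      have h4 : sc ≠ 0 := ne_of_gt hsc0
      field_simp
    rw [heq] at hxm
    linarith [hXi₀]
  have hXg : 2 * ε * sK < X * (1 - δ * sc) := by
    have := (div_lt_iff₀ hg).mp hxm'
    linarith
  have gap : β0 + 2 * ε < α0 := by
    have hpos : 0 < st * sN := mul_pos hstpos hsNpos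
    have p1 : (X - HS) * sN ≤ (α0 * st) * sN :=
      mul_le_mul_of_nonneg_right a_bound (le_of_lt hsNpos)
    have p2 : (β0 * sN) * st ≤ HW * st :=
      mul_le_mul_of_nonneg_right β_bound (le_of_lt hstpos)
    have q1 : (2 * ε * sK) * sN < (X * (1 - δ * sc)) * sN :=
      mul_lt_mul_of_pos_right hXg hsNpos
    have q2 : 0 ≤ 2 * ε * (sK - st) * sN := by
      apply mul_nonneg
      apply mul_nonneg
      · linarith
      · linarith
      · linarith
    have hmul : (β0 + 2 * ε) * (st * sN) < α0 * (st * sN) := by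
      have e1 : (β0 + 2 * ε) * (st * sN) = (β0 * sN) * st + 2 * ε * st * sN := by ring
      have e2 : (X * (1 - δ * sc)) * sN = X * sN - sc * δ * X * sN := by ring
      have e3 : (X - HS) * sN = X * sN - HS * sN := by ring
      have e4 : 2 * ε * (sK - st) * sN = 2 * ε * sK * sN - 2 * ε * st * sN := by ring
      have e5 : (α0 * st) * sN = α0 * (st * sN) := by ring
      linarith [p1, p2, q1, q2, step3]
    exact lt_of_mul_lt_mul_right (by linarith [hmul]) (le_of_lt hpos)
  -- relate the residual of y to v
  set y : EuclideanSpace ℝ (Fin m) := toE (A.mulVec x) + e with hy_def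
  set R : EuclideanSpace ℝ (Fin m) := y - projSpan A Λ y with hR_def
  have hAx : toE (A.mulVec x) = vx + toE (A.mulVec x'') := by
    rw [hvx_def, hxsplit]
    simp only [Matrix.mulVec_add]
    rfl
  have hx''mem : toE (A.mulVec x'') ∈ Submodule.span ℝ ((fun j => col A j) '' (Λ : Set (Fin n))) :=
    mem_span_of_supp A Λ x'' hx''supp
  have hprojy : projSpan A Λ y = projSpan A Λ vx + toE (A.mulVec x'') + projSpan A Λ e := by
    rw [hy_def, hAx, proj_add, proj_add, proj_self A Λ hx''mem]
  have hrR : R = v + (e - projSpan A Λ e) := by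
    rw [hR_def, hprojy, hy_def, hAx, hvres]
    abel
  -- each inner product with R is within ε of q
  have hre : ∀ i, |⟪col A i, R⟫_ℝ - q i| ≤ ε := by
    intro i
    have h1 : ⟪col A i, R⟫_ℝ = q i + ⟪col A i, e - projSpan A Λ e⟫_ℝ := by
      rw [hrR, inner_add_right, hq_def]
    rw [h1]
    simp only [add_sub_cancel_left]
    calc |⟪col A i, e - projSpan A Λ e⟫_ℝ| ≤ ‖col A i‖ * ‖e - projSpan A Λ e‖ :=
          abs_real_inner_le_norm _ _
      _ = ‖e - projSpan A Λ e‖ := by rw [hcol i, one_mul]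
      _ ≤ ‖e‖ := residual_norm_le A Λ e
      _ ≤ ε := he
  -- conclude
  obtain ⟨i₁, hi₁S, hi₁⟩ := Finset.exists_mem_eq_sup' hTΛ (fun i => |q i|)
  have hub : W.inf' hWne (fun i => |⟪col A i, R⟫_ℝ|) ≤ β0 + ε := by
    refine le_trans (Finset.inf'_le (fun i => |⟪col A i, R⟫_ℝ|) hj₀W) ?_
    have h1 := hre j₀
    have h2 : β0 = |q j₀| := by rw [hβ0_def]; exact hj₀
    have h3 : |⟪col A j₀, R⟫_ℝ| ≤ |q j₀| + |⟪col A j₀, R⟫_ℝ - q j₀| := by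
      calc |⟪col A j₀, R⟫_ℝ| = |q j₀ + (⟪col A j₀, R⟫_ℝ - q j₀)| := by ring_nf
        _ ≤ |q j₀| + |⟪col A j₀, R⟫_ℝ - q j₀| := abs_add_le _ _
    rw [h2]
    linarith
  have hlb : α0 - ε ≤ (T \ Λ).sup' hTΛ (fun i => |⟪col A i, R⟫_ℝ|) := by
    have h0 : (T \ Λ).sup' hTΛ (fun i => |⟪col A i, R⟫_ℝ|)
        = S.sup' hTΛ (fun i => |⟪col A i, R⟫_ℝ|) := rfl
    rw [h0]
    refine le_trans ?_ (Finset.le_sup' (fun i => |⟪col A i, R⟫_ℝ|) hi₁S)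
    have h1 := hre i₁
    have h2 : α0 = |q i₁| := by rw [hα0_def]; exact hi₁
    have h3 : |q i₁| ≤ |⟪col A i₁, R⟫_ℝ| + |⟪col A i₁, R⟫_ℝ - q i₁| := by
      calc |q i₁| = |⟪col A i₁, R⟫_ℝ - (⟪col A i₁, R⟫_ℝ - q i₁)| := by ring_nf
        _ ≤ |⟪col A i₁, R⟫_ℝ| + |⟪col A i₁, R⟫_ℝ - q i₁| := abs_sub _ _
    rw [h2]
    linarith
  calc W.inf' hWne (fun i => |⟪col A i, R⟫_ℝ|) ≤ β0 + ε := hub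
    _ < α0 - ε := by linarith [gap]
    _ ≤ (T \ Λ).sup' hTΛ (fun i => |⟪col A i, R⟫_ℝ|) := hlb
end
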